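/- Let U : [0,∞) → ℝ be differentiable with U(0) = 0, with U(t) → 8π as t → +∞, and satisfying the differential inequality U'(t) + U(t)²/(16π) ≤ 4π for all t ≥ 0. Then U(t) ≤ 8π(e^t − 1)/(e^t + 1) for every t ≥ 0. -/

import Mathlib

/-- ODE comparison: if `U` is differentiable on `[0,∞)` with `U(0) = 0`,
`U(t) → 8π` at infinity, and satisfies `U' + U²/(16π) ≤ 4π` on `[0,∞)`,
then `U(t) ≤ 8π(e^t − 1)/(e^t + 1)` for every `t ≥ 0`. -/
theorem stmt_1 (U U' : ℝ → ℝ)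
    (hderiv : ∀ t ∈ Set.Ici (0 : ℝ), HasDerivWithinAt U (U' t) (Set.Ici 0) t)
    (h0 : U 0 = 0)
    (hlim : Filter.Tendsto U Filter.atTop (nhds (8 * Real.pi)))
    (hineq : ∀ t ∈ Set.Ici (0 : ℝ), U' t + (U t) ^ 2 / (16 * Real.pi) ≤ 4 * Real.pi) :
    ∀ t ∈ Set.Ici (0 : ℝ), U t ≤ 8 * Real.pi * (Real.exp t - 1) / (Real.exp t + 1) := by
  have pi_pos := Real.pi_pos
  set W : ℝ → ℝ := fun t => 8 * Real.pi * (Real.exp t - 1) / (Real.exp t + 1) with hW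
  set W' : ℝ → ℝ := fun t => 16 * Real.pi * Real.exp t / (Real.exp t + 1) ^ 2 with hW'
  have hden : ∀ t : ℝ, Real.exp t + 1 ≠ 0 := fun t => by positivity
  have hWderiv : ∀ t : ℝ, HasDerivAt W (W' t) t := by
    intro t
    have h1 : HasDerivAt (fun t => 8 * Real.pi * (Real.exp t - 1)) (8 * Real.pi * Real.exp t) t :=
      ((Real.hasDerivAt_exp t).sub_const 1).const_mul _
    have h2 : HasDerivAt (fun t => Real.exp t + 1) (Real.exp t) t :=
      (Real.hasDerivAt_exp t).add_const 1
    have := h1.div h2 (hden t)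
    refine HasDerivAt.congr_deriv (f := W) this ?_
    show _ = 16 * Real.pi * Real.exp t / (Real.exp t + 1) ^ 2
    congr 1
    ring
  have hWeq : ∀ t : ℝ, W' t = 4 * Real.pi - (W t) ^ 2 / (16 * Real.pi) := by
    intro t
    simp only [hW, hW']
    field_simp
    ring
  have hWnonneg : ∀ t : ℝ, 0 ≤ t → 0 ≤ W t := by
    intro t ht
    have h1 : (1 : ℝ) ≤ Real.exp t := Real.one_le_exp ht
    have : (0:ℝ) < Real.exp t + 1 := by positivity
    apply div_nonneg _ this.le
    nlinarith
  intro t ht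
  have key : ∀ ε > 0, U t ≤ W t + ε := by
    intro ε hε
    have := image_le_of_deriv_right_lt_deriv_boundary
      (f := U) (f' := U') (a := 0) (b := t) (B := fun s => W s + ε) (B' := W')
      (fun x hx => ((hderiv x hx.1).mono (Set.Icc_subset_Ici_self)).continuousWithinAt)
      (fun x hx => (hderiv x hx.1).mono (Set.Ici_subset_Ici.2 hx.1))
      (by simp only [h0]; have := hWnonneg 0 le_rfl; linarith)
      (fun x => (hWderiv x).add_const ε)
      ?_ (Set.right_mem_Icc.2 ht)
    · exact this
    · intro x hx heq
      have hb := hineq x hx.1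
      rw [heq] at hb
      have hWx := hWnonneg x hx.1
      rw [hWeq x]
      have h16 : (0:ℝ) < 16 * Real.pi := by positivity
      have hlt : (W x) ^ 2 / (16 * Real.pi) < (W x + ε) ^ 2 / (16 * Real.pi) :=
        (div_lt_div_iff_of_pos_right h16).2 (by nlinarith)
      linarith
  by_contra h
  push_neg at h
  have h' : W t < U t := h
  have := key ((U t - W t) / 2) (by linarith)
  linarith
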